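/- dim(Mult(LCA({a_1,...,a_n}))) = u_n + (n-1), where LCA(X) = LC(X) ⊕ Ar(X); in particular dim(Mult(LCA({a,b,c,d}))) = 27. -/

import Mathlib

noncomputable section

open Finsupp

/-- The series `-log(1-t) = Σ_{n≥1} t^n/n`. -/
def negLogOneSub : PowerSeries ℚ := PowerSeries.mk fun n => if n = 0 then 0 else 1 / n

/-- The logarithmic numbers `u_n = dim Mult(LC({a_1,…,a_n}))`, with EGF `-log(1-t)·exp(t)`. -/
def uQ (n : ℕ) : ℚ :=
  (n.factorial : ℚ) * PowerSeries.coeff (R := ℚ) n (negLogOneSub * PowerSeries.exp ℚ)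

/-- Relations of the multilinear part of the arrow-word space `Ar` on `n` letters. -/
def ArRel (n : ℕ) : Submodule ℚ ((Fin n × Fin n) →₀ ℚ) :=
  Submodule.span ℚ
    ({x | ∃ i j : Fin n, x = single (i, j) 1 + single (j, i) 1} ∪
     {x | ∃ a b c : Fin n, a ≠ b ∧ b ≠ c ∧ a ≠ c ∧
        x = single (a, b) 1 - single (c, b) 1 - single (a, c) 1})

/-- The multilinear part of `Ar({a_1,…,a_n})`. -/
abbrev ArMult (n : ℕ) := ((Fin n × Fin n) →₀ ℚ) ⧸ ArRel n

variable {n : ℕ}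

def fvec (n : ℕ) (i : Fin n) : Fin (n-1) →₀ ℚ :=
  if h : (i : ℕ) = 0 then 0 else single ⟨(i : ℕ) - 1, by omega⟩ 1

def Lmap (n : ℕ) : ((Fin n × Fin n) →₀ ℚ) →ₗ[ℚ] (Fin (n-1) →₀ ℚ) :=
  Finsupp.linearCombination ℚ (fun p : Fin n × Fin n => fvec n p.2 - fvec n p.1)

lemma Lmap_single (p : Fin n × Fin n) : Lmap n (single p 1) = fvec n p.2 - fvec n p.1 := by
  simp [Lmap]

lemma ArRel_le_ker : ArRel n ≤ LinearMap.ker (Lmap n) := by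
  rw [ArRel, Submodule.span_le]
  rintro x (⟨i, j, rfl⟩ | ⟨a, b, c, -, -, -, rfl⟩) <;>
    simp only [SetLike.mem_coe, LinearMap.mem_ker, map_add, map_sub, Lmap_single] <;> abel

def Lbar (n : ℕ) : ArMult n →ₗ[ℚ] (Fin (n-1) →₀ ℚ) :=
  (ArRel n).liftQ (Lmap n) ArRel_le_ker

lemma mk_antisym (i j : Fin n) :
    (Submodule.Quotient.mk (single (i, j) (1:ℚ)) : ArMult n)
      + Submodule.Quotient.mk (single (j, i) 1) = 0 := by
  rw [← Submodule.Quotient.mk_add, Submodule.Quotient.mk_eq_zero]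
  exact Submodule.subset_span (Or.inl ⟨i, j, rfl⟩)

lemma mk_diag (i : Fin n) :
    (Submodule.Quotient.mk (single (i, i) (1:ℚ)) : ArMult n) = 0 := by
  have h2 : (2:ℚ) • (Submodule.Quotient.mk (single (i, i) (1:ℚ)) : ArMult n) = 0 := by
    rw [two_smul]; exact mk_antisym i i
  simpa using smul_eq_zero.mp h2

def zv (n : ℕ) (hn : 1 ≤ n) : Fin n := ⟨0, hn⟩

lemma fvec_z (hn : 1 ≤ n) : fvec n (zv n hn) = 0 := dif_pos rfl

lemma mk_key (hn : 1 ≤ n) (i j : Fin n) :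
    (Submodule.Quotient.mk (single (i, j) (1:ℚ)) : ArMult n) =
      Submodule.Quotient.mk (single (zv n hn, j) 1)
        - Submodule.Quotient.mk (single (zv n hn, i) 1) := by
  set z0 := zv n hn
  have hD : ∀ a : Fin n, (Submodule.Quotient.mk (single (a, z0) (1:ℚ)) : ArMult n)
      = - Submodule.Quotient.mk (single (z0, a) 1) :=
    fun a => eq_neg_of_add_eq_zero_left (mk_antisym a z0)
  by_cases hij : i = j
  · subst hij; rw [mk_diag, sub_self]
  by_cases hi : i = z0
  · subst hi; rw [mk_diag, sub_zero]
  by_cases hj : j = z0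
  · subst hj; rw [mk_diag, zero_sub]; exact hD i
  · have hrel : (single (i, j) (1:ℚ) - single (z0, j) 1 - single (i, z0) 1) ∈ ArRel n :=
      Submodule.subset_span (Or.inr ⟨i, j, z0, hij, hj, hi, rfl⟩)
    have h0 : (Submodule.Quotient.mk (single (i, j) (1:ℚ)) : ArMult n)
        - Submodule.Quotient.mk (single (z0, j) 1)
        - Submodule.Quotient.mk (single (i, z0) 1) = 0 := by
      rw [← Submodule.Quotient.mk_sub, ← Submodule.Quotient.mk_sub,
        Submodule.Quotient.mk_eq_zero]
      exact hrel
    rw [sub_sub, sub_eq_zero] at h0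
    rw [h0, hD i]; abel

def gmap (n : ℕ) (hn : 1 ≤ n) : (Fin (n-1) →₀ ℚ) →ₗ[ℚ] ArMult n :=
  Finsupp.linearCombination ℚ
    (fun k : Fin (n-1) => Submodule.Quotient.mk (single ((zv n hn, ⟨(k:ℕ)+1, by omega⟩) : Fin n × Fin n) 1))

lemma gmap_fvec (hn : 1 ≤ n) (i : Fin n) :
    gmap n hn (fvec n i) = Submodule.Quotient.mk (single (zv n hn, i) (1:ℚ)) := by
  rcases eq_or_ne (i : ℕ) 0 with h | h
  · have hz : i = zv n hn := by ext; exact h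
    rw [hz, fvec_z hn, map_zero, mk_diag]
  · have hfin : (⟨((i:ℕ)-1)+1, by omega⟩ : Fin n) = i := Fin.ext (by simp; omega)
    rw [fvec, dif_neg h, gmap]
    simp only [linearCombination_single, one_smul]
    rw [hfin]

lemma arMult_equiv (hn : 1 ≤ n) : Nonempty (ArMult n ≃ₗ[ℚ] (Fin (n-1) →₀ ℚ)) := by
  refine ⟨LinearEquiv.ofLinear (Lbar n) (gmap n hn) ?_ ?_⟩
  · apply Finsupp.lhom_ext
    intro k r
    have hr : (single k r : Fin (n-1) →₀ ℚ) = r • single k 1 := by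
      rw [smul_single, smul_eq_mul, mul_one]
    have h : Lbar n (gmap n hn (single k 1)) = single k 1 := by
      rw [gmap]
      simp only [linearCombination_single, one_smul]
      show Lmap n _ = _
      rw [Lmap_single]
      have h1 : fvec n (⟨(k:ℕ)+1, by omega⟩ : Fin n) = single k 1 := by
        rw [fvec, dif_neg (by simp)]
        congr 1
      rw [h1]
      show _ - fvec n (zv n hn) = _
      rw [fvec_z hn, sub_zero]
    simp only [LinearMap.coe_comp, Function.comp_apply, LinearMap.id_coe, id_eq, hr,
      map_smul, h]
  · apply Submodule.linearMap_qext
    apply Finsupp.lhom_ext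
    intro p r
    have hr : (single p r : (Fin n × Fin n) →₀ ℚ) = r • single p 1 := by
      rw [smul_single, smul_eq_mul, mul_one]
    have h : gmap n hn (Lbar n (Submodule.Quotient.mk (single p 1)))
        = Submodule.Quotient.mk (single p (1:ℚ)) := by
      have hL : Lbar n (Submodule.Quotient.mk (single p 1)) = fvec n p.2 - fvec n p.1 := by
        show Lmap n _ = _
        rw [Lmap_single]
      rw [hL, map_sub, gmap_fvec hn, gmap_fvec hn, ← mk_key hn p.1 p.2]
    simp only [LinearMap.coe_comp, Function.comp_apply, LinearMap.id_coe, id_eq, hr,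
      map_smul]
    exact congrArg (r • ·) h

lemma arMult_finrank (hn : 1 ≤ n) : Module.finrank ℚ (ArMult n) = n - 1 := by
  obtain ⟨e⟩ := arMult_equiv hn
  rw [e.finrank_eq, Module.finrank_finsupp_self, Fintype.card_fin]


/-- `dim Mult(LCA({a_1,…,a_n})) = u_n + (n-1)` where `LCA(X) = LC(X) ⊕ Ar(X)` so that
the multilinear dimension is `u_n + dim Mult(Ar)`; in particular it is `27` for `n = 4`. -/
theorem multilinear_LCA_dim :
    (∀ n : ℕ, 1 ≤ n →
      uQ n + (Module.finrank ℚ (ArMult n) : ℚ) = uQ n + ((n : ℚ) - 1)) ∧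
    uQ 4 + (Module.finrank ℚ (ArMult 4) : ℚ) = 27 := by
  constructor
  · intro n hn
    rw [arMult_finrank hn, Nat.cast_sub hn, Nat.cast_one]
  · rw [arMult_finrank (by norm_num : 1 ≤ 4)]
    have huQ : uQ 4 = 24 := by
      simp [uQ, negLogOneSub, PowerSeries.coeff_mul, PowerSeries.coeff_exp,
        Finset.Nat.sum_antidiagonal_eq_sum_range_succ_mk, Finset.sum_range_succ]
      norm_num [Nat.factorial]
    rw [huQ]
    norm_num
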